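/- Let M ∈ ℕ, v : Fin M → ℝ, w : Fin M → ℝ, e ∈ ℝ, and for a finite set A ⊆ Fin M and k ≥ 1 define B_k(A, e) := ∑_{S ⊆ A, |S| ≥ k, v(α_k(S)) = e} (∏_{t ∈ S} w t) · (∏_{t ∈ A \ S} (1 − w t)), where α_k(S) is the k-th smallest index of S. Suppose i ∈ Fin M, A ⊆ Fin M, i ∉ A, and every element of A is greater than i. Then: (a) for k = 1, B_1({i} ∪ A, e) = B_1(A, e) · (1 − w i) + (if v(i) = e then 1 else 0) · w i, provided 0 ≤ w t ≤ 1 for all t ∈ A (so that ∑_{S ⊆ A} (∏_{t∈S} w t)(∏_{t∈A\S}(1−w t)) = 1); and (b) for k ≥ 2, B_k({i} ∪ A, e) = B_k(A, e) · (1 − w i) + B_{k−1}(A, e) · w i. -/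
import Mathlib


open scoped Classical in
/-- The boundary value probability `B_k(A, e)`: the total sampling probability of
subsets `S ⊆ A` with `|S| ≥ k` whose `k`-th highest-ranked element has utility value
`e`. Here `α_k(S)` is the `k`-th smallest index of `S`. -/
noncomputable def boundaryValueProb {M : ℕ} (v w : Fin M → ℝ) (k : ℕ)
    (A : Finset (Fin M)) (e : ℝ) : ℝ :=
  ∑ S ∈ A.powerset.filter
      (fun S => k ≤ S.card ∧ ((S.sort (· ≤ ·))[k - 1]?).map v = some e),
    (∏ t ∈ S, w t) * ∏ t ∈ A \ S, (1 - w t)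

/-- Dynamic programming recurrence for the boundary value probability: if `i` is
ranked higher than every element of `A`, then
(a) `B_1({i} ∪ A, e) = B_1(A, e)·(1 - w i) + 𝕀{v i = e}·w i` (given `w` is `[0,1]`-valued
on `A`), and (b) for `k ≥ 2`, `B_k({i} ∪ A, e) = B_k(A, e)·(1 - w i) + B_{k-1}(A, e)·w i`. -/
theorem boundaryValueProb_recurrence (M : ℕ) (v w : Fin M → ℝ) (e : ℝ)
    (i : Fin M) (A : Finset (Fin M)) (hiA : i ∉ A) (hlt : ∀ a ∈ A, i < a) :
    ((∀ t ∈ A, 0 ≤ w t ∧ w t ≤ 1) →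
      boundaryValueProb v w 1 ({i} ∪ A) e
        = boundaryValueProb v w 1 A e * (1 - w i)
          + (if v i = e then (1 : ℝ) else 0) * w i)
    ∧ (∀ k : ℕ, 2 ≤ k →
      boundaryValueProb v w k ({i} ∪ A) e
        = boundaryValueProb v w k A e * (1 - w i)
          + boundaryValueProb v w (k - 1) A e * w i) := by
  classical
  have hins : ({i} : Finset (Fin M)) ∪ A = insert i A := by
    rw [Finset.insert_eq]
  have key : ∀ k : ℕ,
      boundaryValueProb v w k ({i} ∪ A) e
        = boundaryValueProb v w k A e * (1 - w i)
          + (∑ T ∈ A.powerset,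
              if (k ≤ T.card + 1 ∧ ((i :: T.sort (· ≤ ·))[k-1]?).map v = some e)
              then (∏ t ∈ T, w t) * ∏ t ∈ A \ T, (1 - w t) else 0) * w i := by
    intro k
    have hdisj : Disjoint A.powerset (A.powerset.image (insert i)) := by
      rw [Finset.disjoint_left]
      intro S hS hS'
      obtain ⟨T, hT, rfl⟩ := Finset.mem_image.1 hS'
      exact hiA (Finset.mem_powerset.1 hS (Finset.mem_insert_self i T))
    have hinj : ∀ T ∈ A.powerset, ∀ T' ∈ A.powerset,
        insert i T = insert i T' → T = T' := by
      intro T hT T' hT' h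
      have hiT : i ∉ T := fun h => hiA (Finset.mem_powerset.1 hT h)
      have hiT' : i ∉ T' := fun h => hiA (Finset.mem_powerset.1 hT' h)
      rw [← Finset.erase_insert hiT, ← Finset.erase_insert hiT', h]
    unfold boundaryValueProb
    rw [hins, Finset.sum_filter, Finset.sum_filter, Finset.powerset_insert,
      Finset.sum_union hdisj, Finset.sum_image hinj]
    congr 1
    · rw [Finset.sum_mul]
      refine Finset.sum_congr rfl fun S hS => ?_
      have hSA := Finset.mem_powerset.1 hS
      have hiS : i ∉ S := fun h => hiA (hSA h)
      have h1 : insert i A \ S = insert i (A \ S) :=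
        Finset.insert_sdiff_of_notMem A hiS
      have h2 : i ∉ A \ S := fun h => hiA (Finset.mem_sdiff.1 h).1
      rw [h1, Finset.prod_insert h2]
      split <;> ring
    · rw [Finset.sum_mul]
      refine Finset.sum_congr rfl fun T hT => ?_
      have hTA := Finset.mem_powerset.1 hT
      have hiT : i ∉ T := fun h => hiA (hTA h)
      have hcard : (insert i T).card = T.card + 1 := Finset.card_insert_of_notMem hiT
      have hsort : (insert i T).sort (· ≤ ·) = i :: T.sort (· ≤ ·) :=
        Finset.sort_insert (· ≤ ·) (fun b hb => (hlt b (hTA hb)).le) hiT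
      have hsd : insert i A \ insert i T = A \ T := by
        ext x
        simp only [Finset.mem_sdiff, Finset.mem_insert, not_or]
        constructor
        · rintro ⟨hx | hx, hni, hnT⟩
          · exact absurd hx hni
          · exact ⟨hx, hnT⟩
        · rintro ⟨hx, hnT⟩
          exact ⟨Or.inr hx, fun h => hiA (h ▸ hx), hnT⟩
      rw [hcard, hsort, hsd, Finset.prod_insert hiT]
      split <;> ring
  constructor
  · intro _
    rw [key 1]
    congr 2
    have hsum : ∑ T ∈ A.powerset, (∏ t ∈ T, w t) * ∏ t ∈ A \ T, (1 - w t) = 1 := by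
      rw [← Finset.prod_add]
      simp
    by_cases hv : v i = e
    · rw [if_pos hv]
      refine Eq.trans ?_ hsum
      refine Finset.sum_congr rfl fun T hT => if_pos ?_
      exact ⟨by omega, by rw [show (1:ℕ)-1 = 0 from rfl, List.getElem?_cons_zero,
        Option.map_some, hv]⟩
    · rw [if_neg hv]
      refine Finset.sum_eq_zero fun T hT => if_neg ?_
      rintro ⟨-, h⟩
      rw [show (1:ℕ)-1 = 0 from rfl, List.getElem?_cons_zero, Option.map_some] at h
      exact hv (Option.some.inj h)
  · intro k hk
    rw [key k]
    congr 2
    rw [boundaryValueProb, Finset.sum_filter]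
    refine Finset.sum_congr rfl fun T hT => ?_
    obtain ⟨m, rfl⟩ : ∃ m, k = m + 2 := ⟨k - 2, by omega⟩
    have h1 : m + 2 - 1 = m + 1 := rfl
    have h2 : m + 2 - 1 - 1 = m := rfl
    have h3 : (m + 2 ≤ T.card + 1) ↔ (m + 2 - 1 ≤ T.card) := by omega
    simp only [h1, h2, List.getElem?_cons_succ]
    refine if_congr ?_ rfl rfl
    constructor
    · rintro ⟨hc, he⟩; exact ⟨by omega, he⟩
    · rintro ⟨hc, he⟩; exact ⟨by omega, he⟩
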